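/- arXiv:2204.12676 — 5 statements merged into one kernel-verified Lean document; each statement's English description precedes it below -/
import Mathlib

section
/- Let K ≥ 2 and let u_1, ..., u_K ∈ [0,1] satisfy max_i u_i = 1. Then there exists a collection of nonnegative scalars {r_A}, indexed by nonempty subsets A of {1,...,K}, such that (1) ∑_{A} r_A = 1, and (2) for every i, u_i = ∑_{A : i ∈ A} r_A. -/
open Finset

/-- Decomposition lemma: if `u_1,...,u_K ∈ [0,1]` with `max_i u_i = 1`, there exist
nonnegative scalars `r_A` indexed by nonempty subsets `A` of `{1,...,K}` with total sum `1`
and `u i = ∑_{A ∋ i} r_A`. -/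
theorem stmt0 (K : ℕ) (hK : 2 ≤ K) (u : Fin K → ℝ)
    (h0 : ∀ i, 0 ≤ u i) (h1 : ∀ i, u i ≤ 1) (hmax : ∃ i, u i = 1) :
    ∃ r : Finset (Fin K) → ℝ,
      (∀ A, 0 ≤ r A) ∧ r ∅ = 0 ∧
      (∑ A ∈ (Finset.univ : Finset (Fin K)).powerset, r A) = 1 ∧
      ∀ i, u i =
        ∑ A ∈ (Finset.univ : Finset (Fin K)).powerset.filter (fun A => i ∈ A), r A := by
  have hK0 : 0 < K := by omega
  set σ : Equiv.Perm (Fin K) := Tuple.sort u with hσ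
  have hmono : Monotone (u ∘ σ) := Tuple.monotone_sort u
  set v : Fin K → ℝ := u ∘ σ with hv
  -- G n = v (n-1) for 1 ≤ n ≤ K, G 0 = 0, G n = 1 for n > K
  set G : ℕ → ℝ := fun n => if h : n - 1 < K then (if n = 0 then 0 else v ⟨n - 1, h⟩) else 1
    with hG
  have hG0 : G 0 = 0 := by simp [hG, hK0]
  have hGsucc : ∀ k (hk : k < K), G (k + 1) = v ⟨k, hk⟩ := by
    intro k hk
    simp [hG, hk]
  have hGK : G K = 1 := by
    obtain ⟨i, hi⟩ := hmax
    have h1' : G K = v ⟨K - 1, by omega⟩ := by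
      have := hGsucc (K - 1) (by omega)
      rw [show K - 1 + 1 = K by omega] at this
      exact this
    rw [h1']
    have hle : v (σ.symm i) ≤ v ⟨K - 1, by omega⟩ := by
      apply hmono
      have := (σ.symm i).isLt
      exact Fin.le_def.mpr (by simp only [Fin.val_mk]; omega)
    have hvi : v (σ.symm i) = u i := by simp [hv]
    have := h1 (σ ⟨K - 1, by omega⟩)
    have : v ⟨K - 1, by omega⟩ ≤ 1 := this
    linarith [hle, hvi ▸ hle]
  have hw : ∀ k, k < K → 0 ≤ G (k + 1) - G k := by
    intro k hk
    rcases Nat.eq_zero_or_pos k with h | h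
    · subst h
      rw [hGsucc 0 hk, hG0]
      simpa [hv] using h0 (σ ⟨0, hk⟩)
    · have hk1 : k - 1 < K := by omega
      have hGk : G k = v ⟨k - 1, hk1⟩ := by
        have := hGsucc (k - 1) (by omega)
        rw [show k - 1 + 1 = k by omega] at this
        exact this
      rw [hGsucc k hk, hGk, sub_nonneg]
      apply hmono
      exact Fin.le_def.mpr (by simp only [Fin.val_mk]; omega)
  set B : ℕ → Finset (Fin K) := fun k => univ.filter fun i => k ≤ ((σ.symm i : Fin K) : ℕ)
    with hB
  have hBmem : ∀ k (i : Fin K), i ∈ B k ↔ k ≤ ((σ.symm i : Fin K) : ℕ) := by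
    intro k i; simp [hB]
  have hBne : ∀ k, k < K → (B k).Nonempty := by
    intro k hk
    refine ⟨σ ⟨k, hk⟩, ?_⟩
    rw [hBmem]
    simp
  refine ⟨fun A => ∑ k ∈ Finset.range K, if A = B k then G (k + 1) - G k else 0, ?_, ?_, ?_, ?_⟩
  · intro A
    apply Finset.sum_nonneg
    intro k hk
    rw [Finset.mem_range] at hk
    split
    · exact hw k hk
    · exact le_refl 0
  · apply Finset.sum_eq_zero
    intro k hk
    rw [Finset.mem_range] at hk
    rw [if_neg]
    intro h
    obtain ⟨i, hi⟩ := hBne k hk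
    rw [← h] at hi
    exact absurd hi (Finset.notMem_empty i)
  · rw [Finset.sum_comm]
    have : ∀ k ∈ Finset.range K,
        (∑ A ∈ (Finset.univ : Finset (Fin K)).powerset, if A = B k then G (k + 1) - G k else 0)
          = G (k + 1) - G k := by
      intro k hk
      rw [Finset.sum_ite_eq' _ (B k)]
      rw [if_pos]
      simp [Finset.mem_powerset]
    rw [Finset.sum_congr rfl this, Finset.sum_range_sub G K, hGK, hG0, sub_zero]
  · intro i
    rw [Finset.sum_comm]
    set m : ℕ := ((σ.symm i : Fin K) : ℕ) with hm
    have hmK : m < K := (σ.symm i).isLt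
    have step : ∀ k ∈ Finset.range K,
        (∑ A ∈ (Finset.univ : Finset (Fin K)).powerset.filter (fun A => i ∈ A),
            if A = B k then G (k + 1) - G k else 0)
          = if k ≤ m then G (k + 1) - G k else 0 := by
      intro k hk
      rw [Finset.sum_ite_eq' _ (B k)]
      congr 1
      simp only [Finset.mem_filter, Finset.mem_powerset]
      rw [hBmem]
      simp [eq_iff_iff, hm]
    rw [Finset.sum_congr rfl step]
    have hfilter : ∑ k ∈ Finset.range K, (if k ≤ m then G (k + 1) - G k else 0)
        = ∑ k ∈ Finset.range (m + 1), (G (k + 1) - G k) := by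
      rw [← Finset.sum_filter]
      congr 1
      ext k
      simp [Finset.mem_filter, Finset.mem_range]
      omega
    rw [hfilter, Finset.sum_range_sub G (m + 1), hG0, sub_zero, hGsucc m hmK]
    simp [hv, hm]
end

section
/- Let c : X × X → [0,∞] be lower semicontinuous on a metric space X, and suppose that whenever {x_n} is bounded and sup_n c(x_n', x_n) < ∞ then {(x_n', x_n)} is precompact. Fix a nonempty A ⊆ {1,...,K} and define c_A(x_1,...,x_K) = inf_{x'∈X} ∑_{i∈A} c(x', x_i). Then c_A is lower semicontinuous on X^K: for any sequences x_i^n → x_i (i ∈ A), c_A(x_1,...,x_K) ≤ liminf_n c_A(x_1^n,...,x_K^n). -/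
set_option maxHeartbeats 1000000


open Filter Topology ENNReal

private lemma lsc_seq_aux {Y : Type*} [TopologicalSpace Y] {f : Y → ℝ≥0∞} {a : Y}
    (hf : LowerSemicontinuousAt f a) {u : ℕ → Y} (hu : Tendsto u atTop (𝓝 a)) :
    f a ≤ Filter.liminf (fun n => f (u n)) atTop := by
  refine le_trans hf.le_liminf ?_
  have : Filter.liminf f (𝓝 a) ≤ Filter.liminf f (map u atTop) :=
    Filter.liminf_le_liminf_of_le hu
  exact this

/-- Lower semicontinuity of the barycentric cost `c_A` along sequences, under the
lower semicontinuity and coercivity/compactness assumptions on `c`. -/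
theorem stmt4 {X : Type*} [MetricSpace X] (K : ℕ)
    (c : X → X → ℝ≥0∞)
    (hdiag : ∀ x, c x x = 0)
    (hlsc : LowerSemicontinuous (fun p : X × X => c p.1 p.2))
    (hcoer : ∀ (x x' : ℕ → X), Bornology.IsBounded (Set.range x) →
      (∃ M : ℝ≥0∞, M ≠ ⊤ ∧ ∀ n, c (x' n) (x n) ≤ M) →
      IsCompact (closure (Set.range fun n => (x' n, x n))))
    (A : Finset (Fin K)) (hA : A.Nonempty)
    (x : ℕ → Fin K → X) (xl : Fin K → X)
    (hconv : ∀ i ∈ A, Tendsto (fun n => x n i) atTop (nhds (xl i))) :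
    (⨅ x' : X, ∑ i ∈ A, c x' (xl i)) ≤
      Filter.liminf (fun n => ⨅ x' : X, ∑ i ∈ A, c x' (x n i)) atTop := by
  set f : ℕ → ℝ≥0∞ := fun n => ⨅ x' : X, ∑ i ∈ A, c x' (x n i) with hfdef
  set L : ℝ≥0∞ := Filter.liminf f atTop with hLdef
  rcases eq_or_ne L ⊤ with hLtop | hLtop
  · rw [hLtop]; exact le_top
  set ε : ℕ → ℝ≥0∞ := fun k => ((k : ℝ≥0∞) + 1)⁻¹ with hεdef
  have hεne : ∀ k, ε k ≠ 0 := by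
    intro k
    simp only [hεdef, ne_eq, ENNReal.inv_eq_zero]
    exact ENNReal.add_ne_top.2 ⟨ENNReal.natCast_ne_top k, ENNReal.one_ne_top⟩
  have hεle : ∀ k, ε k ≤ 1 := by
    intro k
    simpa [hεdef] using ENNReal.inv_le_one.mpr (le_add_self)
  have hεtend : Tendsto ε atTop (𝓝 0) := by
    have := ENNReal.tendsto_inv_nat_nhds_zero.comp (tendsto_add_atTop_nat 1)
    refine this.congr fun k => ?_
    simp [hεdef, Function.comp]
  -- extract a subsequence along which `f` nearly attains its liminf
  have hfreq : ∀ k : ℕ, ∃ᶠ n in atTop, f n < L + ε k := fun k =>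
    frequently_lt_of_liminf_lt (by isBoundedDefault)
      (ENNReal.lt_add_right hLtop (hεne k))
  obtain ⟨φ, hφ, hφlt⟩ := Filter.extraction_forall_of_frequently hfreq
  -- choose near-minimizers
  have hy : ∀ k : ℕ, ∃ y : X, ∑ i ∈ A, c y (x (φ k) i) < L + ε k := fun k =>
    iInf_lt_iff.mp (hφlt k)
  choose y hy using hy
  obtain ⟨i₀, hi₀⟩ := hA
  -- coercivity: extract convergent subsequence of near-minimizers
  have hb : Bornology.IsBounded (Set.range fun k => x (φ k) i₀) :=
    Metric.isBounded_range_of_tendsto _ ((hconv i₀ hi₀).comp hφ.tendsto_atTop)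
  have hM : ∀ k, c (y k) (x (φ k) i₀) ≤ L + 1 := by
    intro k
    refine le_trans
      (Finset.single_le_sum (f := fun i => c (y k) (x (φ k) i)) (fun i _ => zero_le) hi₀) ?_
    exact le_trans (hy k).le (add_le_add_right (hεle k) L)
  have hcomp := hcoer (fun k => x (φ k) i₀) y hb
    ⟨L + 1, ENNReal.add_ne_top.2 ⟨hLtop, ENNReal.one_ne_top⟩, hM⟩
  obtain ⟨⟨p, q⟩, _hpq, ψ, hψ, hψt⟩ := hcomp.tendsto_subseq
    (x := fun k => (y k, x (φ k) i₀)) (fun k => subset_closure (Set.mem_range_self k))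
  have hyp : Tendsto (fun k => y (ψ k)) atTop (𝓝 p) :=
    ((continuous_fst.tendsto (p, q)).comp hψt)
  -- lower semicontinuity step
  have key : ∑ i ∈ A, c p (xl i) ≤
      Filter.liminf (fun k => ∑ i ∈ A, c (y (ψ k)) (x (φ (ψ k)) i)) atTop := by
    classical
    set v : ℕ → Fin K → X := fun k i => if i ∈ A then x (φ (ψ k)) i else xl i with hv
    have hgl : LowerSemicontinuousAt (fun z : X × (Fin K → X) => ∑ i ∈ A, c z.1 (z.2 i))
        (p, xl) :=
      lowerSemicontinuousAt_sum fun i _ =>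
        LowerSemicontinuousAt.comp (f := fun pr : X × X => c pr.1 pr.2)
          (g := fun z : X × (Fin K → X) => (z.1, z.2 i)) (hlsc _)
          ((continuous_fst.prodMk ((continuous_apply i).comp continuous_snd)).continuousAt)
    have hvt : Tendsto (fun k => (y (ψ k), v k)) atTop (𝓝 (p, xl)) := by
      refine hyp.prodMk_nhds ?_
      rw [tendsto_pi_nhds]
      intro i
      by_cases hi : i ∈ A
      · simpa [hv, hi, Function.comp_def] using (hconv i hi).comp ((hφ.comp hψ).tendsto_atTop)
      · simpa [hv, hi] using (tendsto_const_nhds : Tendsto (fun _ : ℕ => xl i) atTop _)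
    have h1 := lsc_seq_aux hgl hvt
    refine le_trans h1 (le_of_eq ?_)
    congr 1
    funext k
    refine Finset.sum_congr rfl fun i hi => ?_
    simp [hv, hi]
  calc (⨅ x' : X, ∑ i ∈ A, c x' (xl i))
      ≤ ∑ i ∈ A, c p (xl i) := iInf_le _ p
    _ ≤ Filter.liminf (fun k => ∑ i ∈ A, c (y (ψ k)) (x (φ (ψ k)) i)) atTop := key
    _ ≤ Filter.liminf (fun k => L + ε (ψ k)) atTop := by
        refine Filter.liminf_le_liminf (Eventually.of_forall fun k => (hy (ψ k)).le)
    _ = L := by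
        have : Tendsto (fun k => L + ε (ψ k)) atTop (𝓝 (L + 0)) :=
          tendsto_const_nhds.add (hεtend.comp hψ.tendsto_atTop)
        rw [add_zero] at this
        exact this.liminf_eq
end

section
/- Under the constraints of the previous statement, the functions f_i = (max(g_i,0))^{c̄}, where g^{c̄}(x) = sup_{x'} (g(x') − c(x, x')), satisfy f_i(x) ≥ 0 for all x and ∑_{i=1}^K f_i(x) ≤ 1 for all x ∈ X. -/
open ENNReal Finset
open scoped NNReal

private lemma ereal_sub_add_sub_le (x X : ℝ) (y Y : ℝ≥0∞) :
    ((x : EReal) - (y : ℝ≥0∞)) + ((X : EReal) - (Y : ℝ≥0∞)) ≤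
      ((x + X : ℝ) : EReal) - ((y + Y : ℝ≥0∞) : EReal) := by
  rcases eq_or_ne y ⊤ with hy | hy
  · simp [hy, EReal.sub_top, EReal.bot_add]
  rcases eq_or_ne Y ⊤ with hY | hY
  · simp [hY, EReal.sub_top, EReal.add_bot]
  lift y to NNReal using hy
  lift Y to NNReal using hY
  rw [← ENNReal.coe_add]
  have h1 : ((y : ℝ≥0∞) : EReal) = ((y : ℝ) : EReal) := rfl
  have h2 : ((Y : ℝ≥0∞) : EReal) = ((Y : ℝ) : EReal) := rfl
  have h3 : (((y + Y : ℝ≥0) : ℝ≥0∞) : EReal) = (((y : ℝ) + Y : ℝ) : EReal) := by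
    norm_cast
  rw [h1, h2, h3, ← EReal.coe_sub, ← EReal.coe_sub, ← EReal.coe_add, ← EReal.coe_sub]
  exact_mod_cast le_of_eq (by push_cast; ring)

private lemma ereal_sum_sub_le {ι : Type*} (s : Finset ι) (a : ι → ℝ) (e : ι → ℝ≥0∞) :
    ∑ i ∈ s, (((a i : ℝ) : EReal) - ((e i : ℝ≥0∞) : EReal)) ≤
      ((∑ i ∈ s, a i : ℝ) : EReal) - ((∑ i ∈ s, e i : ℝ≥0∞) : EReal) := by
  classical
  induction s using Finset.induction with
  | empty => simp
  | @insert j s hj ih =>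
    rw [Finset.sum_insert hj, Finset.sum_insert hj, Finset.sum_insert hj]
    calc (((a j : ℝ) : EReal) - ((e j : ℝ≥0∞) : EReal)) +
          ∑ i ∈ s, (((a i : ℝ) : EReal) - ((e i : ℝ≥0∞) : EReal))
        ≤ (((a j : ℝ) : EReal) - ((e j : ℝ≥0∞) : EReal)) +
            (((∑ i ∈ s, a i : ℝ) : EReal) - ((∑ i ∈ s, e i : ℝ≥0∞) : EReal)) :=
          add_le_add_right ih _
      _ ≤ _ := ereal_sub_add_sub_le _ _ _ _

private lemma ereal_sum_iSup_le {ι X : Type*} [Nonempty X] (s : Finset ι)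
    (h : ι → X → EReal) (hnt : ∀ i x, h i x ≠ ⊤) (C : EReal)
    (hb : ∀ t : ι → X, ∑ i ∈ s, h i (t i) ≤ C) :
    ∑ i ∈ s, (⨆ x' : X, h i x') ≤ C := by
  classical
  induction s using Finset.induction generalizing C with
  | empty => simpa using hb Classical.ofNonempty
  | @insert j s hj ih =>
    rw [Finset.sum_insert hj]
    refine EReal.add_le_of_forall_lt fun a' ha' b' hb' ↦ ?_
    obtain ⟨x0, hx0⟩ := lt_iSup_iff.1 ha'
    have hbne : h j x0 ≠ ⊥ := fun hbot ↦ by simp [hbot] at hx0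
    have hsum : ∑ i ∈ s, (⨆ x' : X, h i x') ≤ C - h j x0 := by
      refine ih _ fun t ↦ ?_
      rw [EReal.le_sub_iff_add_le (Or.inl hbne) (Or.inl (hnt j x0))]
      have := hb (Function.update t j x0)
      rw [Finset.sum_insert hj, Function.update_self] at this
      have hcong : ∑ i ∈ s, h i (Function.update t j x0 i) = ∑ i ∈ s, h i (t i) :=
        Finset.sum_congr rfl fun i hi ↦ by
          rw [Function.update_of_ne (fun hij ↦ hj (by rwa [hij] at hi))]
      rw [hcong] at this
      rwa [add_comm]
    have hfin : h j x0 + (C - h j x0) ≤ C := by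
      lift h j x0 to ℝ using ⟨hnt j x0, hbne⟩ with r hr
      rw [add_comm, EReal.sub_add_cancel]
    calc a' + b' ≤ h j x0 + (C - h j x0) :=
          add_le_add hx0.le (hb'.le.trans hsum)
      _ ≤ C := hfin

/-- If `g_1,...,g_K` satisfy the dual constraints `∑_{i∈A} g_i(x_i) ≤ 1 + c_A(x)`, then
`f_i = (max(g_i,0))^{c̄}` satisfies `f_i ≥ 0` and `∑_i f_i ≤ 1` pointwise. -/
theorem stmt8 {X : Type*} (K : ℕ) (c : X → X → ℝ≥0∞) (hdiag : ∀ x, c x x = 0)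
    (g : Fin K → X → ℝ)
    (hfeas : ∀ (A : Finset (Fin K)), A.Nonempty → ∀ x : Fin K → X,
      ((∑ i ∈ A, g i (x i) : ℝ) : EReal) ≤
        1 + (((⨅ x' : X, ∑ i ∈ A, c x' (x i)) : ℝ≥0∞) : EReal))
    (f : Fin K → X → EReal)
    (hf : ∀ i x, f i x =
      ⨆ x' : X, ((max (g i x') 0 : ℝ) : EReal) - ((c x x' : ℝ≥0∞) : EReal)) :
    (∀ i x, 0 ≤ f i x) ∧ ∀ x, (∑ i, f i x) ≤ 1 := by
  constructor
  · intro i x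
    rw [hf]
    refine le_iSup_of_le x ?_
    rw [hdiag x]
    simp only [EReal.coe_ennreal_zero, sub_zero]
    exact_mod_cast le_max_right _ _
  · intro x
    haveI : Nonempty X := ⟨x⟩
    simp only [hf]
    refine ereal_sum_iSup_le _ _ (fun i x' ↦ ?_) 1 (fun t ↦ ?_)
    · rcases eq_or_ne (c x x') ⊤ with hc | hc
      · simp [hc, EReal.sub_top]
      · lift c x x' to NNReal using hc with r hr
        have : ((r : ℝ≥0∞) : EReal) = ((r : ℝ) : EReal) := rfl
        rw [this, ← EReal.coe_sub]
        exact EReal.coe_ne_top _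
    · calc ∑ i, (((max (g i (t i)) 0 : ℝ) : EReal) - ((c x (t i) : ℝ≥0∞) : EReal))
          ≤ ((∑ i, max (g i (t i)) 0 : ℝ) : EReal) -
              ((∑ i, c x (t i) : ℝ≥0∞) : EReal) := ereal_sum_sub_le _ _ _
        _ ≤ 1 := by
          rw [EReal.sub_le_iff_le_add (Or.inl (EReal.coe_ennreal_ne_bot _))
            (Or.inr (fun h => EReal.coe_ne_bot 1 (by rw [EReal.coe_one]; exact h)))]
          set A : Finset (Fin K) := Finset.univ.filter (fun i ↦ 0 < g i (t i)) with hA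
          have hM : (∑ i, max (g i (t i)) 0 : ℝ) = ∑ i ∈ A, g i (t i) := by
            rw [hA, Finset.sum_filter]
            exact Finset.sum_congr rfl fun i _ ↦ by
              rcases lt_or_ge 0 (g i (t i)) with h | h
              · simp [h, max_eq_left h.le]
              · simp [not_lt.2 h, max_eq_right h]
          rw [hM]
          rcases A.eq_empty_or_nonempty with hAe | hAne
          · rw [hAe]
            simp only [Finset.sum_empty, EReal.coe_zero]
            have h1 : (0 : EReal) ≤ 1 := by norm_num
            have h2 : (0 : EReal) ≤ ((∑ i, c x (t i) : ℝ≥0∞) : EReal) :=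
              EReal.coe_ennreal_nonneg _
            calc (0 : EReal) ≤ 1 + 0 := by simp
              _ ≤ 1 + ((∑ i, c x (t i) : ℝ≥0∞) : EReal) := add_le_add_right h2 _
          · refine (hfeas A hAne t).trans (add_le_add_right ?_ _)
            rw [EReal.coe_ennreal_le_coe_ennreal_iff]
            calc (⨅ x' : X, ∑ i ∈ A, c x' (t i)) ≤ ∑ i ∈ A, c x (t i) := iInf_le _ x
              _ ≤ ∑ i, c x (t i) :=
                Finset.sum_le_sum_of_subset (Finset.subset_univ A)
end

section
/- Let X = ℝ^2 with Euclidean distance, ε > 0, and let x_1, x_2, x_3 satisfy: d(x_1,x_2) ≤ 2ε, d(x_1,x_3) > 2ε, d(x_2,x_3) > 2ε. Let μ_i = ω_i δ_{x_i} with ω_1 ≥ ω_2 ≥ ω_3 > 0 and ω_1+ω_2+ω_3 = 1. Then the optimal value of the generalized barycenter problem, inf over λ ≥ μ̃_i (i=1,2,3) of λ(X) + ∑_i C_∞(μ_i, μ̃_i) where C_∞ is the ∞-transport cost with budget ε (i.e. C_∞(μ_i, μ̃_i) = 0 if W_∞(μ_i, μ̃_i) ≤ ε, +∞ otherwise), equals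 ω_1 + ω_3. -/
open MeasureTheory ENNReal

/- The `∞`-transport cost with budget `ε`: `0` if there is a coupling of `μ` and `ν`
concentrated on pairs at distance at most `ε` (i.e. `W_∞(μ,ν) ≤ ε`), `+∞` otherwise. -/
open Classical in
noncomputable def CinfCost {E : Type*} [MeasurableSpace E] [PseudoMetricSpace E] (ε : ℝ)
    (μ ν : Measure E) : ℝ≥0∞ :=
  if ∃ π : Measure (E × E), π.map Prod.fst = μ ∧ π.map Prod.snd = ν ∧
      π {p : E × E | ε < dist p.1 p.2} = 0 then 0 else ⊤

lemma cinf_zero {E : Type*} [MeasurableSpace E] [MetricSpace E] [SecondCountableTopology E]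
    [OpensMeasurableSpace E]
    (ε : ℝ) (w : ℝ≥0∞) (x y : E) (h : dist x y ≤ ε) :
    CinfCost ε (w • Measure.dirac x) (w • Measure.dirac y) = 0 := by
  rw [CinfCost, if_pos]
  refine ⟨w • Measure.dirac (x, y), ?_, ?_, ?_⟩
  · rw [Measure.map_smul, Measure.map_dirac' measurable_fst]
  · rw [Measure.map_smul, Measure.map_dirac' measurable_snd]
  · have hS : MeasurableSet {p : E × E | ε < dist p.1 p.2} :=
      (isOpen_lt continuous_const (continuous_dist.comp
        (continuous_fst.prodMk continuous_snd))).measurableSet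
    rw [Measure.smul_apply, Measure.dirac_apply' _ hS]
    have : (x, y) ∉ {p : E × E | ε < dist p.1 p.2} := by simpa using h
    simp [Set.indicator_of_notMem this]

lemma cinf_conc {E : Type*} [MeasurableSpace E] [MetricSpace E] [SecondCountableTopology E]
    [OpensMeasurableSpace E]
    {ε : ℝ} {w : ℝ≥0∞} {x : E} {ν : Measure E}
    (h : ∃ π : Measure (E × E), π.map Prod.fst = w • Measure.dirac x ∧
      π.map Prod.snd = ν ∧ π {p : E × E | ε < dist p.1 p.2} = 0) :
    w ≤ ν (Metric.closedBall x ε) := by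
  obtain ⟨π, hfst, hsnd, hnull⟩ := h
  have hB : MeasurableSet (Metric.closedBall x ε) :=
    Metric.isClosed_closedBall.measurableSet
  have hx : MeasurableSet ({x} : Set E) := isClosed_singleton.measurableSet
  have huniv : ν Set.univ = w := by
    rw [← hsnd, Measure.map_apply measurable_snd MeasurableSet.univ]
    have : π Set.univ = w := by
      have := congrArg (fun m : Measure E => m Set.univ) hfst
      simpa [Measure.map_apply measurable_fst MeasurableSet.univ] using this
    simpa using this
  have hcompl : ν (Metric.closedBall x ε)ᶜ = 0 := by
    rw [← hsnd, Measure.map_apply measurable_snd hB.compl]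
    have hsub : Prod.snd ⁻¹' (Metric.closedBall x ε)ᶜ ⊆
        {p : E × E | ε < dist p.1 p.2} ∪ Prod.fst ⁻¹' ({x}ᶜ) := by
      rintro ⟨a, b⟩ hb
      by_cases ha : a = x
      · left
        simp only [Set.mem_preimage, Set.mem_compl_iff, Metric.mem_closedBall] at hb
        subst ha
        simp only [Set.mem_setOf_eq]
        rw [dist_comm] at hb
        linarith [not_le.mp hb]
      · right; simpa using ha
    have h2 : π (Prod.fst ⁻¹' ({x}ᶜ : Set E)) = 0 := by
      have := congrArg (fun m : Measure E => m ({x}ᶜ)) hfst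
      simp only [Measure.map_apply measurable_fst hx.compl] at this
      rw [this]
      simp [Measure.dirac_apply' _ hx.compl]
    refine le_antisymm ?_ zero_le
    calc π (Prod.snd ⁻¹' (Metric.closedBall x ε)ᶜ)
        ≤ π ({p : E × E | ε < dist p.1 p.2} ∪ Prod.fst ⁻¹' ({x}ᶜ)) := measure_mono hsub
      _ ≤ π {p : E × E | ε < dist p.1 p.2} + π (Prod.fst ⁻¹' ({x}ᶜ)) := measure_union_le _ _
      _ = 0 := by rw [hnull, h2, add_zero]
  calc w = ν Set.univ := huniv.symm
    _ = ν ((Metric.closedBall x ε) ∪ (Metric.closedBall x ε)ᶜ) := by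
        rw [Set.union_compl_self]
    _ ≤ ν (Metric.closedBall x ε) + ν (Metric.closedBall x ε)ᶜ := measure_union_le _ _
    _ = ν (Metric.closedBall x ε) := by rw [hcompl, add_zero]

/-- Case 3 of the three-point toy example: with `x₁,x₂` within distance `2ε` and `x₃` far
from both, the value of the generalized barycenter problem equals `ω₁ + ω₃`. -/
theorem stmt15 (ε : ℝ) (hε : 0 < ε)
    (x₁ x₂ x₃ : EuclideanSpace ℝ (Fin 2))
    (h12 : dist x₁ x₂ ≤ 2 * ε) (h13 : dist x₁ x₃ > 2 * ε) (h23 : dist x₂ x₃ > 2 * ε)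
    (ω : Fin 3 → ℝ≥0∞) (hw21 : ω 2 ≤ ω 1) (hw10 : ω 1 ≤ ω 0)
    (hpos : ∀ i, 0 < ω i) (hsum : ω 0 + ω 1 + ω 2 = 1)
    (μ : Fin 3 → Measure (EuclideanSpace ℝ (Fin 2)))
    (hμ0 : μ 0 = ω 0 • Measure.dirac x₁)
    (hμ1 : μ 1 = ω 1 • Measure.dirac x₂)
    (hμ2 : μ 2 = ω 2 • Measure.dirac x₃) :
    sInf {v : ℝ≥0∞ | ∃ (lam : Measure (EuclideanSpace ℝ (Fin 2)))
        (mt : Fin 3 → Measure (EuclideanSpace ℝ (Fin 2))),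
      (∀ i, mt i ≤ lam) ∧
      v = lam Set.univ + ∑ i, CinfCost ε (μ i) (mt i)} = ω 0 + ω 2 := by
  set m : EuclideanSpace ℝ (Fin 2) := midpoint ℝ x₁ x₂ with hm
  apply le_antisymm
  · -- upper bound: exhibit the optimal candidate
    apply sInf_le
    refine ⟨ω 0 • Measure.dirac m + ω 2 • Measure.dirac x₃,
      ![ω 0 • Measure.dirac m, ω 1 • Measure.dirac m, ω 2 • Measure.dirac x₃], ?_, ?_⟩
    · intro i
      fin_cases i <;> rw [Measure.le_iff'] <;> intro s <;>
        simp only [Matrix.cons_val_zero, Matrix.cons_val_one, Matrix.head_cons,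
          Matrix.cons_val_two, Matrix.tail_cons, Measure.add_apply, Measure.smul_apply,
          smul_eq_mul]
      · exact le_add_right le_rfl
      · exact le_add_right (mul_le_mul_left hw10 _)
      · exact le_add_left le_rfl
    · have hdm1 : dist x₁ m ≤ ε := by
        rw [hm, dist_left_midpoint]
        rw [show ‖(2:ℝ)‖⁻¹ = 2⁻¹ by norm_num]
        linarith
      have hdm2 : dist x₂ m ≤ ε := by
        rw [hm, dist_right_midpoint]
        rw [show ‖(2:ℝ)‖⁻¹ = 2⁻¹ by norm_num]
        linarith
      have c0 : CinfCost ε (μ 0) (ω 0 • Measure.dirac m) = 0 := by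
        rw [hμ0]; exact cinf_zero ε (ω 0) x₁ m hdm1
      have c1 : CinfCost ε (μ 1) (ω 1 • Measure.dirac m) = 0 := by
        rw [hμ1]; exact cinf_zero ε (ω 1) x₂ m hdm2
      have c2 : CinfCost ε (μ 2) (ω 2 • Measure.dirac x₃) = 0 := by
        rw [hμ2]; exact cinf_zero ε (ω 2) x₃ x₃ (by simp; linarith)
      rw [Fin.sum_univ_three]
      simp only [Matrix.cons_val_zero, Matrix.cons_val_one, Matrix.head_cons,
        Matrix.cons_val_two, Matrix.tail_cons]
      rw [c0, c1, c2]
      simp [Measure.add_apply, Measure.smul_apply]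
  · -- lower bound
    apply le_sInf
    rintro v ⟨lam, mt, hle, rfl⟩
    by_cases h0 : ∃ π : Measure (EuclideanSpace ℝ (Fin 2) × EuclideanSpace ℝ (Fin 2)), π.map Prod.fst = μ 0 ∧ π.map Prod.snd = mt 0 ∧
        π {p : EuclideanSpace ℝ (Fin 2) × EuclideanSpace ℝ (Fin 2) | ε < dist p.1 p.2} = 0
    swap
    · have : CinfCost ε (μ 0) (mt 0) = ⊤ := by rw [CinfCost, if_neg h0]
      have : ∑ i, CinfCost ε (μ i) (mt i) = ⊤ :=
        ENNReal.sum_eq_top.mpr ⟨0, Finset.mem_univ _, this⟩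
      rw [this, add_top]
      exact le_top
    by_cases h2 : ∃ π : Measure (EuclideanSpace ℝ (Fin 2) × EuclideanSpace ℝ (Fin 2)), π.map Prod.fst = μ 2 ∧ π.map Prod.snd = mt 2 ∧
        π {p : EuclideanSpace ℝ (Fin 2) × EuclideanSpace ℝ (Fin 2) | ε < dist p.1 p.2} = 0
    swap
    · have : CinfCost ε (μ 2) (mt 2) = ⊤ := by rw [CinfCost, if_neg h2]
      have : ∑ i, CinfCost ε (μ i) (mt i) = ⊤ :=
        ENNReal.sum_eq_top.mpr ⟨2, Finset.mem_univ _, this⟩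
      rw [this, add_top]
      exact le_top
    rw [hμ0] at h0
    rw [hμ2] at h2
    have hb0 : ω 0 ≤ mt 0 (Metric.closedBall x₁ ε) := cinf_conc h0
    have hb2 : ω 2 ≤ mt 2 (Metric.closedBall x₃ ε) := cinf_conc h2
    have hdisj : Disjoint (Metric.closedBall x₁ ε) (Metric.closedBall x₃ ε) := by
      rw [Set.disjoint_left]
      intro y hy1 hy3
      rw [Metric.mem_closedBall] at hy1 hy3
      have : dist x₁ x₃ ≤ 2 * ε := by
        calc dist x₁ x₃ ≤ dist x₁ y + dist y x₃ := dist_triangle _ _ _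
          _ ≤ ε + ε := by rw [dist_comm] at hy1; exact add_le_add hy1 hy3
          _ = 2 * ε := by ring
      linarith
    have key : ω 0 + ω 2 ≤ lam Set.univ := by
      calc ω 0 + ω 2 ≤ mt 0 (Metric.closedBall x₁ ε) + mt 2 (Metric.closedBall x₃ ε) :=
            add_le_add hb0 hb2
        _ ≤ lam (Metric.closedBall x₁ ε) + lam (Metric.closedBall x₃ ε) :=
            add_le_add (Measure.le_iff'.mp (hle 0) _) (Measure.le_iff'.mp (hle 2) _)
        _ = lam (Metric.closedBall x₁ ε ∪ Metric.closedBall x₃ ε) :=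
            (measure_union hdisj Metric.isClosed_closedBall.measurableSet).symm
        _ ≤ lam Set.univ := measure_mono (Set.subset_univ _)
    exact le_add_right key
end

section
/- With the setup of the three-point toy example (ε-budget ∞-OT cost), suppose all pairwise distances satisfy d(x_i,x_j) ≤ 2ε but the three closed ε-balls B̄(x_i,ε) have empty triple intersection, and ω_1 < ω_2 + ω_3. Then with α_1 = (ω_1+ω_2−ω_3)/2, α_2 = (ω_2+ω_3−ω_1)/2, α_3 = (ω_3+ω_1−ω_2)/2, we have α_i ≥ 0, α_1+α_2+α_3 = 1/2, α_i + α_j equals the appropriate pairwise masses, and the optimal adversarial classification power equals 1/2 (hence the optimal adversarial risk equals 1/2). -/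
open MeasureTheory ENNReal

abbrev E2 := EuclideanSpace ℝ (Fin 2)

lemma cost_dichotomy {E : Type*} [MeasurableSpace E] [PseudoMetricSpace E] (ε : ℝ)
    (μ ν : Measure E) : CinfCost ε μ ν = 0 ∨ CinfCost ε μ ν = ⊤ := by
  rw [CinfCost]; split_ifs <;> [left; right] <;> rfl

lemma cost_exists_of_ne_top {E : Type*} [MeasurableSpace E] [PseudoMetricSpace E] (ε : ℝ)
    (μ ν : Measure E) (h : CinfCost ε μ ν ≠ ⊤) :
    ∃ π : Measure (E × E), π.map Prod.fst = μ ∧ π.map Prod.snd = ν ∧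
      π {p : E × E | ε < dist p.1 p.2} = 0 := by
  rw [CinfCost] at h; split_ifs at h with hc
  · exact hc
  · exact absurd rfl h

lemma cost_zero_of (ε : ℝ) (x0 : E2) (c : ℝ≥0∞) (mt : Measure E2)
    (hmass : mt Set.univ = c) (hsupp : mt {y | ε < dist x0 y} = 0) :
    CinfCost ε (c • Measure.dirac x0) mt = 0 := by
  rw [CinfCost, if_pos]
  refine ⟨mt.map (Prod.mk x0), ?_, ?_, ?_⟩
  · rw [Measure.map_map measurable_fst measurable_prodMk_left]
    have : (Prod.fst ∘ Prod.mk x0 : E2 → E2) = fun _ => x0 := rfl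
    rw [this, Measure.map_const, hmass]
  · rw [Measure.map_map measurable_snd measurable_prodMk_left]
    have : (Prod.snd ∘ Prod.mk x0 : E2 → E2) = id := rfl
    rw [this, Measure.map_id]
  · rw [Measure.map_apply measurable_prodMk_left
      (measurableSet_lt measurable_const continuous_dist.measurable)]
    simpa using hsupp

lemma cost_props (ε : ℝ) (x0 : E2) (c : ℝ≥0∞) (mt : Measure E2)
    (h : ∃ π : Measure (E2 × E2), π.map Prod.fst = c • Measure.dirac x0 ∧
      π.map Prod.snd = mt ∧ π {p : E2 × E2 | ε < dist p.1 p.2} = 0) :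
    mt Set.univ = c ∧ mt {y | ε < dist x0 y} = 0 := by
  obtain ⟨π, h1, h2, h3⟩ := h
  have hS : MeasurableSet {y : E2 | ε < dist x0 y} :=
    measurableSet_lt measurable_const (continuous_dist.measurable.comp
      (measurable_const.prodMk measurable_id))
  constructor
  · have : mt Set.univ = π Set.univ := by
      rw [← h2, Measure.map_apply measurable_snd MeasurableSet.univ]; rfl
    have h1' : π Set.univ = c := by
      have := congrArg (fun m : Measure E2 => m Set.univ) h1
      simp only [Measure.map_apply measurable_fst MeasurableSet.univ] at this
      simpa using this
    rw [this, h1']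
  · have hmt : mt {y | ε < dist x0 y} = π (Prod.snd ⁻¹' {y | ε < dist x0 y}) := by
      rw [← h2, Measure.map_apply measurable_snd hS]
    have hsub : Prod.snd ⁻¹' {y : E2 | ε < dist x0 y} ⊆
        (Prod.fst ⁻¹' ({x0}ᶜ)) ∪ {p : E2 × E2 | ε < dist p.1 p.2} := by
      intro p hp
      by_cases hp1 : p.1 = x0
      · right; simpa [hp1] using hp
      · left; exact hp1
    have hz1 : π (Prod.fst ⁻¹' ({x0}ᶜ)) = 0 := by
      rw [← Measure.map_apply measurable_fst (measurableSet_singleton x0).compl, h1]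
      simp
    have hle := (measure_mono (μ := π) hsub).trans
      (measure_union_le (Prod.fst ⁻¹' ({x0}ᶜ)) {p : E2 × E2 | ε < dist p.1 p.2})
    rw [hz1, h3, add_zero] at hle
    rw [hmt]
    exact le_antisymm hle zero_le


/-- Case 4-(i) of the three-point toy example: all pairwise distances are at most `2ε`,
the triple intersection of the `ε`-balls is empty, and `ω₁ < ω₂ + ω₃`.  Then the
coefficients `α_i` are nonnegative, sum to `1/2`, pair up to the masses `ω`, and the
optimal adversarial classification power equals `1/2` (hence the adversarial risk is
`1/2`). -/
theorem stmt16 (ε : ℝ) (hε : 0 < ε)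
    (x : Fin 3 → EuclideanSpace ℝ (Fin 2))
    (hdist : ∀ i j, dist (x i) (x j) ≤ 2 * ε)
    (hpair : ∀ i j, i ≠ j →
      (Metric.closedBall (x i) ε ∩ Metric.closedBall (x j) ε).Nonempty)
    (htriple : Metric.closedBall (x 0) ε ∩ Metric.closedBall (x 1) ε ∩
      Metric.closedBall (x 2) ε = ∅)
    (ω : Fin 3 → ℝ) (hw21 : ω 2 ≤ ω 1) (hw10 : ω 1 ≤ ω 0)
    (hpos : ∀ i, 0 < ω i) (hsum : ω 0 + ω 1 + ω 2 = 1)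
    (hlt : ω 0 < ω 1 + ω 2)
    (μ : Fin 3 → Measure (EuclideanSpace ℝ (Fin 2)))
    (hμ : ∀ i, μ i = ENNReal.ofReal (ω i) • Measure.dirac (x i))
    (α : Fin 3 → ℝ)
    (hα0 : α 0 = (ω 0 + ω 1 - ω 2) / 2)
    (hα1 : α 1 = (ω 1 + ω 2 - ω 0) / 2)
    (hα2 : α 2 = (ω 2 + ω 0 - ω 1) / 2)
    (Bstar : ℝ≥0∞)
    (hBstar : Bstar = sSup {v : ℝ≥0∞ | ∃ f : Fin 3 → EuclideanSpace ℝ (Fin 2) → ℝ,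
      (∀ i, Measurable (f i)) ∧ (∀ i y, 0 ≤ f i y) ∧ (∀ y, ∑ i, f i y = 1) ∧
      v = sInf {w : ℝ≥0∞ | ∃ mt : Fin 3 → Measure (EuclideanSpace ℝ (Fin 2)),
        w = (∑ i, ∫⁻ y, ENNReal.ofReal (f i y) ∂(mt i)) +
          ∑ i, CinfCost ε (μ i) (mt i)}}) :
    (∀ i, 0 ≤ α i) ∧ α 0 + α 1 + α 2 = 1 / 2 ∧
    α 0 + α 1 = ω 1 ∧ α 1 + α 2 = ω 2 ∧ α 0 + α 2 = ω 0 ∧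
    Bstar = 1 / 2 ∧ (1 : ℝ≥0∞) - Bstar = 1 / 2 := by
  have h0 : 0 ≤ α 0 := by rw [hα0]; nlinarith [hpos 0, hpos 2]
  have h1 : 0 ≤ α 1 := by rw [hα1]; linarith
  have h2 : 0 ≤ α 2 := by rw [hα2]; nlinarith [hpos 2]
  have hhalf : α 0 + α 1 + α 2 = 1 / 2 := by rw [hα0, hα1, hα2]; linarith
  have hp01 : α 0 + α 1 = ω 1 := by rw [hα0, hα1]; ring
  have hp12 : α 1 + α 2 = ω 2 := by rw [hα1, hα2]; ring
  have hp02 : α 0 + α 2 = ω 0 := by rw [hα0, hα2]; ring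
  obtain ⟨y01, hy01⟩ := hpair 0 1 (by decide)
  obtain ⟨y12, hy12⟩ := hpair 1 2 (by decide)
  obtain ⟨y02, hy02⟩ := hpair 0 2 (by decide)
  have hhalfE : ENNReal.ofReal (1 / 2 : ℝ) = 1 / 2 := by
    rw [ENNReal.ofReal_div_of_pos (by norm_num)]; norm_num
  -- the adversary's strategy, giving value ≤ 1/2 for any admissible f
  have key : ∀ f : Fin 3 → E2 → ℝ, (∀ i, Measurable (f i)) → (∀ i y, 0 ≤ f i y) →
      (∀ y, ∑ i, f i y = 1) →
      ∃ w ∈ {w : ℝ≥0∞ | ∃ mt : Fin 3 → Measure E2,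
          w = (∑ i, ∫⁻ y, ENNReal.ofReal (f i y) ∂(mt i)) + ∑ i, CinfCost ε (μ i) (mt i)},
        w ≤ 1 / 2 := by
    intro f hmf hnn hsum1
    set m0 : Measure E2 :=
      ENNReal.ofReal (α 0) • Measure.dirac y01 + ENNReal.ofReal (α 2) • Measure.dirac y02 with hm0
    set m1 : Measure E2 :=
      ENNReal.ofReal (α 0) • Measure.dirac y01 + ENNReal.ofReal (α 1) • Measure.dirac y12 with hm1
    set m2 : Measure E2 :=
      ENNReal.ofReal (α 1) • Measure.dirac y12 + ENNReal.ofReal (α 2) • Measure.dirac y02 with hm2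
    have hd010 : ¬ ε < dist (x 0) y01 := not_lt.2 (by rw [dist_comm]; exact hy01.1)
    have hd011 : ¬ ε < dist (x 1) y01 := not_lt.2 (by rw [dist_comm]; exact hy01.2)
    have hd121 : ¬ ε < dist (x 1) y12 := not_lt.2 (by rw [dist_comm]; exact hy12.1)
    have hd122 : ¬ ε < dist (x 2) y12 := not_lt.2 (by rw [dist_comm]; exact hy12.2)
    have hd020 : ¬ ε < dist (x 0) y02 := not_lt.2 (by rw [dist_comm]; exact hy02.1)
    have hd022 : ¬ ε < dist (x 2) y02 := not_lt.2 (by rw [dist_comm]; exact hy02.2)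
    have c0 : CinfCost ε (μ 0) m0 = 0 := by
      rw [hμ 0]
      refine cost_zero_of ε (x 0) _ _ ?_ ?_
      · simp [hm0, ← ENNReal.ofReal_add h0 h2, hp02]
      · simp [hm0, Measure.dirac_apply, Set.indicator, hd010, hd020]
    have c1 : CinfCost ε (μ 1) m1 = 0 := by
      rw [hμ 1]
      refine cost_zero_of ε (x 1) _ _ ?_ ?_
      · simp [hm1, ← ENNReal.ofReal_add h0 h1, hp01]
      · simp [hm1, Measure.dirac_apply, Set.indicator, hd011, hd121]
    have c2 : CinfCost ε (μ 2) m2 = 0 := by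
      rw [hμ 2]
      refine cost_zero_of ε (x 2) _ _ ?_ ?_
      · simp [hm2, ← ENNReal.ofReal_add h1 h2, hp12]
      · simp [hm2, Measure.dirac_apply, Set.indicator, hd122, hd022]
    refine ⟨_, ⟨![m0, m1, m2], rfl⟩, ?_⟩
    have L : ∀ i (a b : ℝ) (y z : E2),
        ∫⁻ y', ENNReal.ofReal (f i y') ∂(ENNReal.ofReal a • Measure.dirac y +
          ENNReal.ofReal b • Measure.dirac z)
        = ENNReal.ofReal a * ENNReal.ofReal (f i y) +
          ENNReal.ofReal b * ENNReal.ofReal (f i z) := by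
      intro i a b y z
      rw [lintegral_add_measure, lintegral_smul_measure, lintegral_smul_measure,
        lintegral_dirac' _ ((hmf i).ennreal_ofReal), lintegral_dirac' _ ((hmf i).ennreal_ofReal),
        smul_eq_mul, smul_eq_mul]
    have pair_le : ∀ (i j k : Fin 3) (y : E2), f i y + f j y + f k y = 1 →
        ENNReal.ofReal (f i y) + ENNReal.ofReal (f j y) ≤ 1 := by
      intro i j k y hs
      rw [← ENNReal.ofReal_add (hnn i y) (hnn j y), ← ENNReal.ofReal_one]
      apply ENNReal.ofReal_le_ofReal
      linarith [hnn k y]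
    have hs3 : ∀ y, f 0 y + f 1 y + f 2 y = 1 := by
      intro y; have := hsum1 y; rwa [Fin.sum_univ_three] at this
    calc (∑ i, ∫⁻ y, ENNReal.ofReal (f i y) ∂(![m0, m1, m2] i)) +
          ∑ i, CinfCost ε (μ i) (![m0, m1, m2] i)
        = ENNReal.ofReal (α 0) * (ENNReal.ofReal (f 0 y01) + ENNReal.ofReal (f 1 y01)) +
          ENNReal.ofReal (α 1) * (ENNReal.ofReal (f 1 y12) + ENNReal.ofReal (f 2 y12)) +
          ENNReal.ofReal (α 2) * (ENNReal.ofReal (f 0 y02) + ENNReal.ofReal (f 2 y02)) := by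
          simp only [Fin.sum_univ_three, Matrix.cons_val_zero, Matrix.cons_val_one,
            Matrix.head_cons, Matrix.cons_val_two, Matrix.tail_cons]
          rw [hm0, hm1, hm2, L 0 (α 0) (α 2) y01 y02, L 1 (α 0) (α 1) y01 y12,
            L 2 (α 1) (α 2) y12 y02, c0, c1, c2]
          ring
      _ ≤ ENNReal.ofReal (α 0) * 1 + ENNReal.ofReal (α 1) * 1 + ENNReal.ofReal (α 2) * 1 := by
          gcongr
          · exact pair_le 0 1 2 y01 (hs3 y01)
          · exact pair_le 1 2 0 y12 (by linarith [hs3 y12])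
          · exact pair_le 0 2 1 y02 (by linarith [hs3 y02])
      _ = 1 / 2 := by
          rw [mul_one, mul_one, mul_one, ← ENNReal.ofReal_add h0 h1,
            ← ENNReal.ofReal_add (by linarith) h2, hhalf, hhalfE]
  have hB : Bstar = 1 / 2 := by
    rw [hBstar]
    apply le_antisymm
    · apply sSup_le
      rintro v ⟨f, hmf, hnn, hsum1, rfl⟩
      obtain ⟨w, hw, hwle⟩ := key f hmf hnn hsum1
      exact (sInf_le hw).trans hwle
    · apply le_sSup
      classical
      set g : Fin 3 → E2 → ℝ :=
        fun i y => if y ∈ Metric.closedBall (x i) ε then 1 / 2 else 0 with hg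
      set f : Fin 3 → E2 → ℝ :=
        fun i y => g i y + (1 - (g 0 y + g 1 y + g 2 y)) / 3 with hf
      have hgle : ∀ y, g 0 y + g 1 y + g 2 y ≤ 1 := by
        intro y
        by_cases hb0 : y ∈ Metric.closedBall (x 0) ε <;>
          by_cases hb1 : y ∈ Metric.closedBall (x 1) ε <;>
          by_cases hb2 : y ∈ Metric.closedBall (x 2) ε
        · exfalso
          have : y ∈ Metric.closedBall (x 0) ε ∩ Metric.closedBall (x 1) ε ∩
              Metric.closedBall (x 2) ε := ⟨⟨hb0, hb1⟩, hb2⟩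
          rw [htriple] at this; exact this
        all_goals
          simp only [hg, Metric.mem_closedBall] at hb0 hb1 hb2 ⊢
          simp only [hb0, hb1, hb2, if_true, if_false]
          norm_num
      have hmf : ∀ i, Measurable (f i) := by
        intro i
        apply Measurable.add
        · exact Measurable.ite measurableSet_closedBall measurable_const measurable_const
        · apply Measurable.div _ measurable_const
          apply Measurable.sub measurable_const
          exact ((Measurable.ite measurableSet_closedBall measurable_const
            measurable_const).add (Measurable.ite measurableSet_closedBall measurable_const
            measurable_const)).add (Measurable.ite measurableSet_closedBall measurable_const
            measurable_const)
      have hnn : ∀ i y, 0 ≤ f i y := by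
        intro i y
        have hg0 : 0 ≤ g i y := by rw [hg]; dsimp only; split <;> norm_num
        have := hgle y
        simp only [hf]
        linarith
      have hsum1 : ∀ y, ∑ i, f i y = 1 := by
        intro y
        rw [Fin.sum_univ_three]
        simp only [hf]
        ring
      refine ⟨f, hmf, hnn, hsum1, ?_⟩
      apply le_antisymm
      · -- 1/2 ≤ sInf
        apply le_sInf
        rintro w ⟨mt, rfl⟩
        by_cases hc : ∀ i, CinfCost ε (μ i) (mt i) = 0
        · have main : ∀ i, (1 / 2 : ℝ≥0∞) * ENNReal.ofReal (ω i) ≤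
              ∫⁻ y, ENNReal.ofReal (f i y) ∂(mt i) := by
            intro i
            have hex := cost_exists_of_ne_top ε (μ i) (mt i) (by rw [hc i]; exact zero_ne_top)
            rw [hμ i] at hex
            obtain ⟨hmass, hsupp⟩ := cost_props ε (x i) _ (mt i) hex
            have hcompl : (Metric.closedBall (x i) ε)ᶜ = {y : E2 | ε < dist (x i) y} := by
              ext y
              simp [Metric.mem_closedBall, not_le, dist_comm]
            have hball : mt i (Metric.closedBall (x i) ε) = ENNReal.ofReal (ω i) := by
              refine le_antisymm ?_ ?_
              · rw [← hmass]; exact measure_mono (Set.subset_univ _)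
              · rw [← hmass]
                calc mt i Set.univ = mt i (Metric.closedBall (x i) ε ∪
                      (Metric.closedBall (x i) ε)ᶜ) := by rw [Set.union_compl_self]
                  _ ≤ mt i (Metric.closedBall (x i) ε) +
                      mt i ((Metric.closedBall (x i) ε)ᶜ) := measure_union_le _ _
                  _ = mt i (Metric.closedBall (x i) ε) := by
                      rw [hcompl, hsupp, add_zero]
            have hind : (Metric.closedBall (x i) ε).indicator
                (fun _ => (1 / 2 : ℝ≥0∞)) ≤ fun y => ENNReal.ofReal (f i y) := by
              intro y
              by_cases hy : y ∈ Metric.closedBall (x i) ε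
              · simp only [Set.indicator_of_mem hy]
                rw [← hhalfE]
                apply ENNReal.ofReal_le_ofReal
                have hgy : g i y = 1 / 2 := by rw [hg]; simp [hy]
                have := hgle y
                simp only [hf]
                linarith
              · simp [Set.indicator_of_notMem hy]
            calc (1 / 2 : ℝ≥0∞) * ENNReal.ofReal (ω i)
                = ∫⁻ y, (Metric.closedBall (x i) ε).indicator
                    (fun _ => (1 / 2 : ℝ≥0∞)) y ∂(mt i) := by
                  rw [lintegral_indicator measurableSet_closedBall, setLIntegral_const, hball,
                    mul_comm]
              _ ≤ _ := lintegral_mono hind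
          calc (1 / 2 : ℝ≥0∞) = 1 / 2 * ENNReal.ofReal 1 := by norm_num
            _ = ∑ i, (1 / 2 : ℝ≥0∞) * ENNReal.ofReal (ω i) := by
                rw [Fin.sum_univ_three, ← mul_add, ← mul_add,
                  ← ENNReal.ofReal_add (le_of_lt (hpos 0)) (le_of_lt (hpos 1)),
                  ← ENNReal.ofReal_add (by linarith [hpos 0, hpos 1]) (le_of_lt (hpos 2)), hsum]
            _ ≤ ∑ i, ∫⁻ y, ENNReal.ofReal (f i y) ∂(mt i) :=
                Finset.sum_le_sum (fun i _ => main i)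
            _ ≤ _ := le_self_add
        · push_neg at hc
          obtain ⟨i, hi⟩ := hc
          have : CinfCost ε (μ i) (mt i) = ⊤ := (cost_dichotomy ε _ _).resolve_left hi
          have htop : (∑ i, CinfCost ε (μ i) (mt i)) = ⊤ :=
            ENNReal.sum_eq_top.2 ⟨i, Finset.mem_univ i, this⟩
          rw [htop, add_top]
          exact le_top
      · -- sInf ≤ 1/2
        obtain ⟨w, hw, hwle⟩ := key f hmf hnn hsum1
        exact (sInf_le hw).trans hwle
  refine ⟨?_, hhalf, hp01, hp12, hp02, hB, ?_⟩
  · intro i; fin_cases i; exacts [h0, h1, h2]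
  · rw [hB]
    apply ENNReal.sub_eq_of_eq_add (by norm_num)
    rw [ENNReal.add_halves]
end
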